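/- Let (Ω, F, P) be a probability space, X : Ω → ℝ a random variable, Y(0), Y(1) integrable random variables, π, π̃ : ℝ → {0,1} measurable policies, and set Y = π̃(X)·Y(1) + (1−π̃(X))·Y(0) and m(w, x) = E[Y(w) | X = x]. Then E[Y(π(X))] = E[π(X)·π̃(X)·Y + (1−π(X))·(1−π̃(X))·Y] + E[π(X)·(1−π̃(X))·m(1, X)] + E[(1−π(X))·π̃(X)·m(0, X)]. -/

import Mathlib

open MeasureTheory

lemma weight_condexp_swap {Ω : Type*} [MeasurableSpace Ω] (μ : Measure Ω) [IsProbabilityMeasure μ]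
    (X : Ω → ℝ) (hX : Measurable X)
    (c : ℝ → ℝ) (hc : Measurable c) (hc01 : ∀ x, c x = 0 ∨ c x = 1)
    (Z : Ω → ℝ) (hZ : Integrable Z μ) :
    ∫ ω, c (X ω) * (μ[Z | MeasurableSpace.comap X (inferInstance : MeasurableSpace ℝ)]) ω ∂μ
      = ∫ ω, c (X ω) * Z ω ∂μ := by
  have hm : MeasurableSpace.comap X (inferInstance : MeasurableSpace ℝ)
      ≤ (inferInstance : MeasurableSpace Ω) := hX.comap_le
  have hs : MeasurableSet[MeasurableSpace.comap X (inferInstance : MeasurableSpace ℝ)]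
      (X ⁻¹' (c ⁻¹' {1})) := ⟨c ⁻¹' {1}, hc (measurableSet_singleton 1), rfl⟩
  have hs' : MeasurableSet (X ⁻¹' (c ⁻¹' {1})) := hm _ hs
  have key : ∀ f : Ω → ℝ, ∫ ω, c (X ω) * f ω ∂μ = ∫ ω in X ⁻¹' (c ⁻¹' {1}), f ω ∂μ := by
    intro f
    rw [← integral_indicator hs']
    refine integral_congr_ae (ae_of_all μ fun ω => ?_)
    rcases hc01 (X ω) with h | h
    · have hω : ω ∉ X ⁻¹' (c ⁻¹' {1}) := by simp [Set.mem_preimage, h]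
      simp [Set.indicator_of_notMem hω, h]
    · have hω : ω ∈ X ⁻¹' (c ⁻¹' {1}) := by simp [Set.mem_preimage, h]
      simp [Set.indicator_of_mem hω, h]
  rw [key, key]
  exact setIntegral_condExp hm hZ hs

theorem stmt1 {Ω : Type*} [MeasurableSpace Ω] (μ : Measure Ω) [IsProbabilityMeasure μ]
    (X : Ω → ℝ) (hX : Measurable X)
    (Y0 Y1 : Ω → ℝ) (hY0 : Integrable Y0 μ) (hY1 : Integrable Y1 μ)
    (pi pit : ℝ → ℝ) (hpim : Measurable pi) (hpitm : Measurable pit)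
    (hpi01 : ∀ x, pi x = 0 ∨ pi x = 1) (hpit01 : ∀ x, pit x = 0 ∨ pit x = 1)
    (Y : Ω → ℝ) (hY : Y = fun ω => pit (X ω) * Y1 ω + (1 - pit (X ω)) * Y0 ω)
    (m0 m1 : Ω → ℝ)
    (hm0 : m0 = μ[Y0 | MeasurableSpace.comap X (inferInstance : MeasurableSpace ℝ)])
    (hm1 : m1 = μ[Y1 | MeasurableSpace.comap X (inferInstance : MeasurableSpace ℝ)]) :
    ∫ ω, (pi (X ω) * Y1 ω + (1 - pi (X ω)) * Y0 ω) ∂μ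
      = ∫ ω, (pi (X ω) * pit (X ω) * Y ω
              + (1 - pi (X ω)) * (1 - pit (X ω)) * Y ω) ∂μ
        + ∫ ω, pi (X ω) * (1 - pit (X ω)) * m1 ω ∂μ
        + ∫ ω, (1 - pi (X ω)) * pit (X ω) * m0 ω ∂μ := by
  -- rewrite the conditional-expectation integrals
  have h1 : ∫ ω, pi (X ω) * (1 - pit (X ω)) * m1 ω ∂μ
      = ∫ ω, pi (X ω) * (1 - pit (X ω)) * Y1 ω ∂μ := by
    rw [hm1]
    exact weight_condexp_swap μ X hX (fun x => pi x * (1 - pit x))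
      (hpim.mul (measurable_const.sub hpitm))
      (fun x => by rcases hpi01 x with h | h <;> rcases hpit01 x with h' | h' <;> simp [h, h'])
      Y1 hY1
  have h0 : ∫ ω, (1 - pi (X ω)) * pit (X ω) * m0 ω ∂μ
      = ∫ ω, (1 - pi (X ω)) * pit (X ω) * Y0 ω ∂μ := by
    rw [hm0]
    exact weight_condexp_swap μ X hX (fun x => (1 - pi x) * pit x)
      ((measurable_const.sub hpim).mul hpitm)
      (fun x => by rcases hpi01 x with h | h <;> rcases hpit01 x with h' | h' <;> simp [h, h'])
      Y0 hY0
  rw [h1, h0]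
  -- integrability helpers
  have bddmul : ∀ (w : ℝ → ℝ), Measurable w → (∀ x, w x = 0 ∨ w x = 1) →
      ∀ (Z : Ω → ℝ), Integrable Z μ → Integrable (fun ω => w (X ω) * Z ω) μ := by
    intro w hw hw01 Z hZ
    exact hZ.bdd_mul ((hw.comp hX).aestronglyMeasurable)
      (c := 1) (ae_of_all μ fun ω => by rcases hw01 (X ω) with h | h <;> simp [h])
  have hYint : Integrable Y μ := by
    rw [hY]
    exact (bddmul pit hpitm hpit01 Y1 hY1).add
      (bddmul (fun x => 1 - pit x) (measurable_const.sub hpitm)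
        (fun x => by rcases hpit01 x with h | h <;> simp [h]) Y0 hY0)
  have iA : Integrable (fun ω => pi (X ω) * pit (X ω) * Y ω
      + (1 - pi (X ω)) * (1 - pit (X ω)) * Y ω) μ := by
    exact (bddmul (fun x => pi x * pit x) (hpim.mul hpitm)
        (fun x => by rcases hpi01 x with h | h <;> rcases hpit01 x with h' | h' <;> simp [h, h'])
        Y hYint).add
      (bddmul (fun x => (1 - pi x) * (1 - pit x))
        ((measurable_const.sub hpim).mul (measurable_const.sub hpitm))
        (fun x => by rcases hpi01 x with h | h <;> rcases hpit01 x with h' | h' <;> simp [h, h'])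
        Y hYint)
  have iB : Integrable (fun ω => pi (X ω) * (1 - pit (X ω)) * Y1 ω) μ :=
    bddmul (fun x => pi x * (1 - pit x)) (hpim.mul (measurable_const.sub hpitm))
      (fun x => by rcases hpi01 x with h | h <;> rcases hpit01 x with h' | h' <;> simp [h, h'])
      Y1 hY1
  have iC : Integrable (fun ω => (1 - pi (X ω)) * pit (X ω) * Y0 ω) μ :=
    bddmul (fun x => (1 - pi x) * pit x) ((measurable_const.sub hpim).mul hpitm)
      (fun x => by rcases hpi01 x with h | h <;> rcases hpit01 x with h' | h' <;> simp [h, h'])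
      Y0 hY0
  have iAB : Integrable (fun ω => pi (X ω) * pit (X ω) * Y ω
      + (1 - pi (X ω)) * (1 - pit (X ω)) * Y ω
      + pi (X ω) * (1 - pit (X ω)) * Y1 ω) μ := iA.add iB
  rw [← integral_add iA iB, ← integral_add iAB iC]
  refine integral_congr_ae (ae_of_all μ fun ω => ?_)
  simp only [Pi.add_apply]
  subst hY
  rcases hpi01 (X ω) with h | h <;> rcases hpit01 (X ω) with h' | h' <;> simp [h, h']
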